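/- Let h₁, h₂ ∈ ℝ and let Z be a 2×2 matrix with eigenvalues z₁ ≠ z₂ and entries z_{ij} satisfying −(h₁−h₂)²·z₁₂z₂₁/(z₁−z₂)² = (|z₁₂| + |z₂₁|)², with h₁ ≠ h₂. Then the quantity z₁₂z₂₁/(z₁−z₂)² is real and nonpositive, and c := (h₁−h₂)(z₂₂−z₁₁)/(z₁−z₂) is real. -/

import Mathlib

open Matrix

theorem nonpos_ratio_and_real_c_of_condition_iv
    (h₁ h₂ : ℝ) (hh : h₁ ≠ h₂)
    (Z : Matrix (Fin 2) (Fin 2) ℂ) (z₁ z₂ : ℂ)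
    (hsum : z₁ + z₂ = Matrix.trace Z) (hprod : z₁ * z₂ = Matrix.det Z)
    (hne : z₁ ≠ z₂)
    (hiv : -((h₁ - h₂ : ℝ) : ℂ) ^ 2 * (Z 0 1 * Z 1 0) / (z₁ - z₂) ^ 2 =
      (((‖Z 0 1‖ + ‖Z 1 0‖) ^ 2 : ℝ) : ℂ)) :
    (∃ t : ℝ, t ≤ 0 ∧ (Z 0 1 * Z 1 0) / (z₁ - z₂) ^ 2 = (t : ℂ)) ∧
    (∃ c : ℝ, ((h₁ - h₂ : ℝ) : ℂ) * (Z 1 1 - Z 0 0) / (z₁ - z₂) = (c : ℂ)) := by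
  have hD : z₁ - z₂ ≠ 0 := sub_ne_zero.mpr hne
  have hD2 : (z₁ - z₂) ^ 2 ≠ 0 := pow_ne_zero _ hD
  have ha' : h₁ - h₂ ≠ 0 := sub_ne_zero.mpr hh
  have hcc : ((h₁ : ℂ) - h₂) ≠ 0 := by
    simpa using Complex.ofReal_ne_zero.mpr ha'
  have ha2 : (h₁ - h₂) ^ 2 ≠ 0 := pow_ne_zero _ ha'
  set R : ℝ := (‖Z 0 1‖ + ‖Z 1 0‖) ^ 2 with hR
  have hRnn : 0 ≤ R := sq_nonneg _
  set t : ℝ := -(R / (h₁ - h₂) ^ 2) with ht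
  have ht0 : t ≤ 0 := neg_nonpos.mpr (div_nonneg hRnn (sq_nonneg _))
  have htr : t * (h₁ - h₂) ^ 2 = -R := by rw [ht]; field_simp
  have htrc : (t : ℂ) * ((h₁ : ℂ) - h₂) ^ 2 = -(R : ℂ) := by exact_mod_cast htr
  have h' : -(((h₁ : ℂ) - h₂) ^ 2) * (Z 0 1 * Z 1 0) = (R : ℂ) * (z₁ - z₂) ^ 2 := by
    push_cast at hiv
    field_simp at hiv
    linear_combination hiv
  have hw : Z 0 1 * Z 1 0 = (t : ℂ) * (z₁ - z₂) ^ 2 := by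
    apply mul_left_cancel₀ (pow_ne_zero 2 hcc)
    linear_combination (-1 : ℂ) * h' + (-(z₁ - z₂) ^ 2) * htrc
  have hratio : (Z 0 1 * Z 1 0) / (z₁ - z₂) ^ 2 = (t : ℂ) := by
    rw [hw, mul_div_assoc, div_self hD2, mul_one]
  refine ⟨⟨t, ht0, hratio⟩, ?_⟩
  have hkey : (z₁ - z₂) ^ 2 = (Z 1 1 - Z 0 0) ^ 2 + 4 * (Z 0 1 * Z 1 0) := by
    have htrace : Matrix.trace Z = Z 0 0 + Z 1 1 := Matrix.trace_fin_two Z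
    have hdet : Matrix.det Z = Z 0 0 * Z 1 1 - Z 0 1 * Z 1 0 := Matrix.det_fin_two Z
    have e : (z₁ - z₂) ^ 2 = (z₁ + z₂) ^ 2 - 4 * (z₁ * z₂) := by ring
    rw [e, hsum, hprod, htrace, hdet]; ring
  set r : ℝ := 1 - 4 * t with hr
  have hsq : (Z 1 1 - Z 0 0) ^ 2 = (r : ℂ) * (z₁ - z₂) ^ 2 := by
    push_cast [hr]
    linear_combination -hkey - 4 * hw
  set u : ℂ := (Z 1 1 - Z 0 0) / (z₁ - z₂) with hu
  have hu2 : u ^ 2 = (r : ℂ) := by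
    rw [hu, div_pow, hsq, mul_div_assoc, div_self hD2, mul_one]
  have hrnn : 0 ≤ r := by rw [hr]; linarith
  have hfact : (u - (Real.sqrt r : ℂ)) * (u + (Real.sqrt r : ℂ)) = 0 := by
    have hs : ((Real.sqrt r : ℝ) : ℂ) ^ 2 = (r : ℂ) := by
      rw [← Complex.ofReal_pow, Real.sq_sqrt hrnn]
    linear_combination hu2 - hs
  rcases mul_eq_zero.mp hfact with h | h
  · refine ⟨(h₁ - h₂) * Real.sqrt r, ?_⟩
    have hu' : u = (Real.sqrt r : ℂ) := sub_eq_zero.mp h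
    rw [mul_div_assoc, ← hu, hu']
    push_cast
    ring
  · refine ⟨(h₁ - h₂) * (-Real.sqrt r), ?_⟩
    have hu' : u = -(Real.sqrt r : ℂ) := eq_neg_of_add_eq_zero_left h
    rw [mul_div_assoc, ← hu, hu']
    push_cast
    ring
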